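/- Let Γ be a graph with a distinguished vertex v. The link double of the double satisfies D°_{(v,1)}(D(Γ)) ≅ D(D*_v(Γ)): the link double of the double of Γ at the vertex (v,1) is isomorphic, as a graph, to the double of the star double of Γ at v. -/

import Mathlib

/-- The double of a graph. -/
def GraphDouble {V : Type*} (G : SimpleGraph V) : SimpleGraph (V × Bool) where
  Adj p q := G.Adj p.1 q.1
  symm := ⟨fun _ _ h => G.symm.symm _ _ h⟩
  loopless := ⟨fun p h => G.loopless.irrefl p.1 h⟩

/-- The link double `D°_v(Γ)`: two copies of `Γ` identified along `lk(v)` (represented by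
the copies `(w, false)` for `w ∈ lk(v)`), with both copies of `v` removed. -/
def LinkDouble {V : Type*} (G : SimpleGraph V) (v : V) :
    SimpleGraph {p : V × Bool // p.1 ≠ v ∧ (G.Adj v p.1 → p.2 = false)} where
  Adj p q := G.Adj p.1.1 q.1.1 ∧ (p.1.2 = q.1.2 ∨ G.Adj v p.1.1 ∨ G.Adj v q.1.1)
  symm := by
    constructor
    rintro p q ⟨h1, h2⟩
    refine ⟨G.symm.symm _ _ h1, ?_⟩
    rcases h2 with h | h | h
    · exact Or.inl h.symm
    · exact Or.inr (Or.inr h)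
    · exact Or.inr (Or.inl h)
  loopless := ⟨fun p h => G.loopless.irrefl p.1.1 h.1⟩

/-- The star double `D*_v(Γ)`: two copies of `Γ` identified along `st(v)` (represented by
the copies `(w, false)` for `w ∈ st(v)`). -/
def StarDouble {V : Type*} (G : SimpleGraph V) (v : V) :
    SimpleGraph {p : V × Bool // (G.Adj v p.1 ∨ p.1 = v) → p.2 = false} where
  Adj p q := G.Adj p.1.1 q.1.1 ∧
    (p.1.2 = q.1.2 ∨ (G.Adj v p.1.1 ∨ p.1.1 = v) ∨ (G.Adj v q.1.1 ∨ q.1.1 = v))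
  symm := by
    constructor
    rintro p q ⟨h1, h2⟩
    refine ⟨G.symm.symm _ _ h1, ?_⟩
    rcases h2 with h | h | h
    · exact Or.inl h.symm
    · exact Or.inr (Or.inr h)
    · exact Or.inr (Or.inl h)
  loopless := ⟨fun p h => G.loopless.irrefl p.1.1 h.1⟩

section Aux
open Classical in
/-- Forward map: `((x,b),c) ↦ ((x,c),b)` generically, `((v,false),c) ↦ ((v,false),c)`. -/
noncomputable def stmt9Fwd {V : Type*} (G : SimpleGraph V) (v : V)
    (p : {p : (V × Bool) × Bool // p.1 ≠ (v, true) ∧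
      ((GraphDouble G).Adj (v, true) p.1 → p.2 = false)}) :
    {q : V × Bool // (G.Adj v q.1 ∨ q.1 = v) → q.2 = false} × Bool :=
  if h : p.1.1.1 = v then
    (⟨(v, false), fun _ => rfl⟩, p.1.2)
  else
    (⟨(p.1.1.1, p.1.2), fun hx => p.2.2 (hx.resolve_right h)⟩, p.1.1.2)

open Classical in
/-- Backward map. -/
noncomputable def stmt9Bwd {V : Type*} (G : SimpleGraph V) (v : V)
    (q : {q : V × Bool // (G.Adj v q.1 ∨ q.1 = v) → q.2 = false} × Bool) :
    {p : (V × Bool) × Bool // p.1 ≠ (v, true) ∧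
      ((GraphDouble G).Adj (v, true) p.1 → p.2 = false)} :=
  if h : q.1.1.1 = v then
    ⟨((v, false), q.2), by simp, fun ha => absurd ha (by simp [GraphDouble])⟩
  else
    ⟨((q.1.1.1, q.2), q.1.1.2),
      by simp [h], fun ha => q.1.2 (Or.inl (by simpa [GraphDouble] using ha))⟩

lemma stmt9Fwd_fst_ne {V : Type*} (G : SimpleGraph V) (v : V) (p) (h : p.1.1.1 ≠ v) :
    ((stmt9Fwd G v p).1 : V × Bool) = (p.1.1.1, p.1.2) := by
  simp [stmt9Fwd, h]

lemma stmt9Fwd_snd_ne {V : Type*} (G : SimpleGraph V) (v : V) (p) (h : p.1.1.1 ≠ v) :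
    (stmt9Fwd G v p).2 = p.1.1.2 := by
  simp [stmt9Fwd, h]

lemma stmt9Fwd_fst_eq {V : Type*} (G : SimpleGraph V) (v : V) (p) (h : p.1.1.1 = v) :
    ((stmt9Fwd G v p).1 : V × Bool) = (v, false) := by
  simp [stmt9Fwd, h]

lemma stmt9Fwd_snd_eq {V : Type*} (G : SimpleGraph V) (v : V) (p) (h : p.1.1.1 = v) :
    (stmt9Fwd G v p).2 = p.1.2 := by
  simp [stmt9Fwd, h]

end Aux

/-- `D°_{(v,1)}(D(Γ)) ≅ D(D*_v(Γ))`: the link double of the double of `Γ` at the vertex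
`(v,1)` is isomorphic to the double of the star double of `Γ` at `v`. -/
theorem stmt9 {V : Type*} (G : SimpleGraph V) (v : V) :
    Nonempty (LinkDouble (GraphDouble G) (v, true) ≃g GraphDouble (StarDouble G v)) := by
  classical
  refine ⟨{ toFun := stmt9Fwd G v, invFun := stmt9Bwd G v,
            left_inv := ?_, right_inv := ?_, map_rel_iff' := ?_ }⟩
  · rintro ⟨⟨⟨x, b⟩, c⟩, hne, hc⟩
    by_cases h : x = v
    · subst h
      cases b with
      | false => simp [stmt9Fwd, stmt9Bwd]
      | true => exact absurd rfl hne
    · simp [stmt9Fwd, stmt9Bwd, h]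
  · rintro ⟨⟨⟨x, b⟩, hb⟩, c⟩
    by_cases h : x = v
    · subst h
      have hb' : b = false := hb (Or.inr rfl)
      subst hb'
      simp [stmt9Fwd, stmt9Bwd]
    · simp [stmt9Fwd, stmt9Bwd, h]
  · rintro ⟨⟨⟨x, b⟩, c⟩, hnex, hcx⟩ ⟨⟨⟨y, b'⟩, c'⟩, hney, hcy⟩
    show (GraphDouble (StarDouble G v)).Adj _ _ ↔ _
    simp only [Equiv.coe_fn_mk]
    change G.Adj (stmt9Fwd G v ⟨((x, b), c), hnex, hcx⟩).1.1.1 (stmt9Fwd G v ⟨((y, b'), c'), hney, hcy⟩).1.1.1 ∧ ((stmt9Fwd G v ⟨((x, b), c), hnex, hcx⟩).1.1.2 = (stmt9Fwd G v ⟨((y, b'), c'), hney, hcy⟩).1.1.2 ∨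
      (G.Adj v (stmt9Fwd G v ⟨((x, b), c), hnex, hcx⟩).1.1.1 ∨ (stmt9Fwd G v ⟨((x, b), c), hnex, hcx⟩).1.1.1 = v) ∨ (G.Adj v (stmt9Fwd G v ⟨((y, b'), c'), hney, hcy⟩).1.1.1 ∨ (stmt9Fwd G v ⟨((y, b'), c'), hney, hcy⟩).1.1.1 = v)) ↔
      G.Adj x y ∧ (c = c' ∨ G.Adj v x ∨ G.Adj v y)
    by_cases hx : x = v <;> by_cases hy : y = v
    · rw [stmt9Fwd_fst_eq G v _ hx, stmt9Fwd_fst_eq G v _ hy]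
      subst hx; subst hy
      simp
    · rw [stmt9Fwd_fst_eq G v _ hx, stmt9Fwd_fst_ne G v _ hy]
      subst hx
      simp only
      constructor
      · rintro ⟨h, -⟩
        exact ⟨h, Or.inr (Or.inr h)⟩
      · rintro ⟨h, -⟩
        exact ⟨h, Or.inr (Or.inl (Or.inr trivial))⟩
    · rw [stmt9Fwd_fst_ne G v _ hx, stmt9Fwd_fst_eq G v _ hy]
      subst hy
      simp only
      constructor
      · rintro ⟨h, -⟩
        exact ⟨h, Or.inr (Or.inl h.symm)⟩
      · rintro ⟨h, -⟩
        exact ⟨h, Or.inr (Or.inr (Or.inr trivial))⟩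
    · rw [stmt9Fwd_fst_ne G v _ hx, stmt9Fwd_fst_ne G v _ hy]
      simp only [hx, hy, or_false]
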